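/- arXiv:1305.0057 — 2 statements merged into one kernel-verified Lean document; each statement's English description precedes it below -/
import Mathlib

section
/- Let Φ be an irreducible reduced root system with base Π, J ⊆ Π, π the projection modulo ⟨Π∖J⟩, and Φ_J = π(Φ)∖{0}. Let ã be the highest root of Φ and α̃ = π(ã) the maximal relative root. Let γ be a simple relative root. If iα̃ + jγ ∈ Φ_J for integers i, j, then i ∈ {0, ±1}; moreover if i ≠ 0 then i and j have opposite signs (or j = 0). -/
open scoped RealInnerProductSpace

/-- A reduced root system `Φ` with a fixed base (system of simple roots) `base`
in a real inner product space. -/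
structure RootSystemData (V : Type) [NormedAddCommGroup V] [InnerProductSpace ℝ V] where
  Φ : Set V
  base : Finset V
  finite : Φ.Finite
  zero_notMem : (0:V) ∉ Φ
  neg_mem : ∀ a ∈ Φ, -a ∈ Φ
  reduced : ∀ a ∈ Φ, ∀ t : ℝ, t • a ∈ Φ → t = 1 ∨ t = -1
  reflect_mem : ∀ a ∈ Φ, ∀ b ∈ Φ, b - (2 * (inner ℝ a b : ℝ) / (inner ℝ a a : ℝ)) • a ∈ Φ
  cartan_int : ∀ a ∈ Φ, ∀ b ∈ Φ, ∃ n : ℤ, 2 * (inner ℝ a b : ℝ) / (inner ℝ a a : ℝ) = (n : ℝ)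
  base_sub : ↑base ⊆ Φ
  base_indep : LinearIndependent ℝ (fun b : base => (b : V))
  base_gen : ∀ a ∈ Φ,
    (∃ c : V → ℕ, a = ∑ b ∈ base, c b • b) ∨ (∃ c : V → ℕ, -a = ∑ b ∈ base, c b • b)

namespace RootSystemData

variable {V : Type} [NormedAddCommGroup V] [InnerProductSpace ℝ V] (RS : RootSystemData V)

/-- `a` is a nonnegative integral combination of the simple roots. -/
def IsPos (a : V) : Prop := ∃ c : V → ℕ, a = ∑ b ∈ RS.base, c b • b

/-- The quotient space `V / ⟨Π ∖ J⟩`, ambient space of the relative roots. -/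
abbrev Qspace (J : Finset V) : Type :=
  V ⧸ Submodule.span ℝ ((RS.base : Set V) \ (J : Set V))

/-- The canonical projection `π : V → V / ⟨Π ∖ J⟩`. -/
def proj (J : Finset V) : V →ₗ[ℝ] RS.Qspace J :=
  Submodule.mkQ _

/-- The set of relative roots `Φ_J = π(Φ) ∖ {0}`. -/
def relRoots (J : Finset V) : Set (RS.Qspace J) := (RS.proj J '' RS.Φ) \ {0}

/-- `β` is a simple relative root: a nonzero image of a simple root in `J`. -/
def IsSimpleRel (J : Finset V) (β : RS.Qspace J) : Prop :=
  β ≠ 0 ∧ ∃ b ∈ J, β = RS.proj J b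

/-- `β` is a positive relative root: a relative root that is a nonnegative
integral combination of the simple relative roots. -/
def IsPosRel (J : Finset V) (β : RS.Qspace J) : Prop :=
  β ∈ RS.relRoots J ∧ ∃ c : V → ℕ, β = ∑ b ∈ J, c b • RS.proj J b

/-- `a` is maximal in `S` with respect to the base `Π`. -/
def IsMaximalIn (S : Set V) (a : V) : Prop := a ∈ S ∧ ∀ b ∈ RS.base, a + b ∉ S

/-- `a` is minimal in `S` with respect to the base `Π`. -/
def IsMinimalIn (S : Set V) (a : V) : Prop := a ∈ S ∧ ∀ b ∈ RS.base, a - b ∉ S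

/-- `a` is the highest root: every root is obtained from it by subtracting a
nonnegative combination of simple roots. -/
def IsHighest (a : V) : Prop :=
  a ∈ RS.Φ ∧ ∀ b ∈ RS.Φ, ∃ c : V → ℕ, a - b = ∑ x ∈ RS.base, c x • x

/-- `S` is an irreducible component of `Φ`: a nonempty subset orthogonal to its
complement admitting no further nontrivial orthogonal splitting. -/
def IsComponent (S : Set V) : Prop :=
  S ⊆ RS.Φ ∧ S.Nonempty ∧ (∀ a ∈ S, ∀ b ∈ RS.Φ \ S, (inner ℝ a b : ℝ) = 0) ∧
    ∀ T ⊆ S, T.Nonempty → (∀ a ∈ T, ∀ b ∈ RS.Φ \ T, (inner ℝ a b : ℝ) = 0) → T = S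

/-- The root system is irreducible. -/
def Irred : Prop := RS.IsComponent RS.Φ

end RootSystemData

section Aux
open RootSystemData
variable {V : Type} [NormedAddCommGroup V] [InnerProductSpace ℝ V] (RS : RootSystemData V)

lemma aux_inner_self_pos {x : V} (h : x ≠ 0) : 0 < (inner ℝ x x : ℝ) := by
  rw [real_inner_self_eq_norm_sq]
  have := norm_pos_iff.mpr h
  positivity

lemma mem_ne_zero {a : V} (ha : a ∈ RS.Φ) : a ≠ 0 :=
  fun h => RS.zero_notMem (h ▸ ha)

/-- Uniqueness of coefficients over the base. -/
lemma coeff_unique (f g : V → ℝ)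
    (h : ∑ b ∈ RS.base, f b • b = ∑ b ∈ RS.base, g b • b) :
    ∀ b ∈ RS.base, f b = g b := by
  have h2 := linearIndependent_iff'.mp RS.base_indep Finset.univ
      (fun i => f (i : V) - g (i : V)) ?_
  · intro b hb
    have := h2 ⟨b, hb⟩ (Finset.mem_univ _)
    simpa [sub_eq_zero] using this
  · have e1 := Finset.sum_coe_sort RS.base (fun b => (f b - g b) • b)
    rw [e1]
    simp only [sub_smul, Finset.sum_sub_distrib, h, sub_self]

/-- A root has no mixed-sign real representation over the base. -/
lemma no_mixed {v : V} (hv : v ∈ RS.Φ) (h : V → ℝ)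
    (hrep : v = ∑ b ∈ RS.base, h b • b)
    {x : V} (hx : x ∈ RS.base) (hxpos : 0 < h x)
    {z : V} (hz : z ∈ RS.base) (hzneg : h z < 0) : False := by
  rcases RS.base_gen v hv with ⟨c, hc⟩ | ⟨c, hc⟩
  · have hcR : ∑ b ∈ RS.base, h b • b = ∑ b ∈ RS.base, ((c b : ℝ)) • b := by
      rw [← hrep, hc]; simp [Nat.cast_smul_eq_nsmul]
    have h1 := coeff_unique RS _ _ hcR z hz
    have : (0:ℝ) ≤ h z := by rw [h1]; positivity
    linarith
  · have hcR : ∑ b ∈ RS.base, h b • b = ∑ b ∈ RS.base, (-(c b : ℝ)) • b := by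
      rw [← hrep]
      have hv' : v = -∑ b ∈ RS.base, ((c b) : ℕ) • b := by
        rw [← hc, neg_neg]
      rw [hv']
      simp [neg_smul, ← Finset.sum_neg_distrib, Nat.cast_smul_eq_nsmul]
    have h1 := coeff_unique RS _ _ hcR x hx
    have : h x ≤ 0 := by rw [h1]; simp [Nat.cast_nonneg]
    linarith

end Aux
section Aux2
open RootSystemData
variable {V : Type} [NormedAddCommGroup V] [InnerProductSpace ℝ V] (RS : RootSystemData V)

/-- If two distinct roots have positive inner ℝ product, their difference is a root. -/
lemma root_sub_mem {a b : V} (ha : a ∈ RS.Φ) (hb : b ∈ RS.Φ) (hne : a ≠ b)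
    (hpos : 0 < (inner ℝ a b : ℝ)) : a - b ∈ RS.Φ := by
  have ha0 : a ≠ 0 := mem_ne_zero RS ha
  have hb0 : b ≠ 0 := mem_ne_zero RS hb
  have haa : 0 < (inner ℝ a a : ℝ) := aux_inner_self_pos ha0
  have hbb : 0 < (inner ℝ b b : ℝ) := aux_inner_self_pos hb0
  obtain ⟨m, hm⟩ := RS.cartan_int a ha b hb
  obtain ⟨n, hn⟩ := RS.cartan_int b hb a ha
  have hmpos : (0:ℝ) < m := by rw [← hm]; positivity
  have hba : (inner ℝ b a : ℝ) = inner ℝ a b := real_inner_comm a b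
  have hnpos : (0:ℝ) < n := by
    rw [← hn, hba]
    positivity
  have hm1 : 1 ≤ m := by
    have : 0 < m := by exact_mod_cast hmpos
    omega
  have hn1 : 1 ≤ n := by
    have : 0 < n := by exact_mod_cast hnpos
    omega
  -- strict Cauchy-Schwarz
  have hTNE : ‖b‖ • a ≠ ‖a‖ • b := by
    intro hEq
    have hbn : (0:ℝ) < ‖b‖ := norm_pos_iff.mpr hb0
    have hrepa : (‖a‖ / ‖b‖) • b = a := by
      rw [div_eq_mul_inv, mul_comm, mul_smul, ← hEq, smul_smul, inv_mul_cancel₀ hbn.ne',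
        one_smul]
    rcases RS.reduced b hb (‖a‖ / ‖b‖) (by rw [hrepa]; exact ha) with h1 | h1
    · exact hne (by rw [← hrepa, h1, one_smul])
    · have : (0:ℝ) < ‖a‖ / ‖b‖ := by
        have := norm_pos_iff.mpr ha0
        positivity
      rw [h1] at this; linarith
  have hcs : (inner ℝ a b : ℝ) < ‖a‖ * ‖b‖ := inner_lt_norm_mul_iff_real.mpr hTNE
  have hsq : (inner ℝ a b : ℝ) * (inner ℝ a b : ℝ) < (inner ℝ a a : ℝ) * (inner ℝ b b : ℝ) := by
    rw [real_inner_self_eq_norm_mul_norm, real_inner_self_eq_norm_mul_norm]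
    nlinarith [norm_nonneg a, norm_nonneg b]
  have hmn4 : (m:ℝ) * (n:ℝ) < 4 := by
    rw [← hm, ← hn, hba]
    rw [div_mul_div_comm, div_lt_iff₀ (by positivity)]
    nlinarith
  have hmn : m = 1 ∨ n = 1 := by
    by_contra hcon
    push_neg at hcon
    have h2m : 2 ≤ m := by omega
    have h2n : 2 ≤ n := by omega
    have : (4:ℝ) ≤ (m:ℝ) * n := by
      have : (2:ℝ) ≤ (m:ℝ) := by exact_mod_cast h2m
      have : (2:ℝ) ≤ (n:ℝ) := by exact_mod_cast h2n
      nlinarith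
    linarith
  rcases hmn with h1 | h1
  · have := RS.reflect_mem a ha b hb
    rw [hm, h1] at this
    simp only [Int.cast_one, one_smul] at this
    have := RS.neg_mem _ this
    rwa [neg_sub] at this
  · have := RS.reflect_mem b hb a ha
    rwa [hn, h1, Int.cast_one, one_smul] at this

/-- Distinct simple roots have nonpositive inner ℝ product. -/
lemma simple_orth {x z : V} (hx : x ∈ RS.base) (hz : z ∈ RS.base) (hne : x ≠ z) :
    (inner ℝ x z : ℝ) ≤ 0 := by
  by_contra hcon
  push_neg at hcon
  classical
  have hxΦ : x ∈ RS.Φ := RS.base_sub hx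
  have hzΦ : z ∈ RS.Φ := RS.base_sub hz
  have hsub := root_sub_mem RS hxΦ hzΦ hne hcon
  have hrep : x - z = ∑ b ∈ RS.base,
      ((if b = x then (1:ℝ) else 0) - (if b = z then (1:ℝ) else 0)) • b := by
    simp only [sub_smul, ite_smul, zero_smul, Finset.sum_sub_distrib,
      Finset.sum_ite_eq', hx, hz, if_true, one_smul]
  exact no_mixed RS hsub _ hrep hx (by simp [hne]) hz (by simp [Ne.symm hne])

end Aux2
section Aux3
open RootSystemData
variable {V : Type} [NormedAddCommGroup V] [InnerProductSpace ℝ V] (RS : RootSystemData V)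

lemma bad_case {a' x : V} (ha' : a' ∈ RS.Φ) (hx : x ∈ RS.base)
    (ha : a' + x ∈ RS.Φ) (horth : (inner ℝ a' x : ℝ) = 0)
    (f' : V → ℕ) (hrep : a' = ∑ y ∈ RS.base, (f' y : ℝ) • y) (hf'x : f' x = 0) :
    False := by
  classical
  have ha'0 : a' ≠ 0 := mem_ne_zero RS ha'
  have ha'a' : 0 < (inner ℝ a' a' : ℝ) := aux_inner_self_pos ha'0
  obtain ⟨z, hz, hfz⟩ : ∃ z ∈ RS.base, f' z ≠ 0 := by
    by_contra hcon
    push_neg at hcon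
    apply ha'0
    rw [hrep]
    apply Finset.sum_eq_zero
    intro y hy
    rw [hcon y hy]; simp
  have hzx : z ≠ x := by intro h; exact hfz (h ▸ hf'x)
  have hinner : (inner ℝ a' (a' + x) : ℝ) = inner ℝ a' a' := by
    rw [inner_add_right, horth, add_zero]
  have hrefl := RS.reflect_mem a' ha' (a' + x) ha
  have hscal : 2 * (inner ℝ a' (a'+x) : ℝ) / (inner ℝ a' a' : ℝ) = 2 := by
    rw [hinner]; field_simp
  rw [hscal] at hrefl
  have heq : a' + x - (2:ℝ) • a' = x - a' := by
    rw [two_smul]; abel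
  rw [heq] at hrefl
  have hrep2 : x - a' = ∑ y ∈ RS.base,
      ((if y = x then (1:ℝ) else 0) - (f' y : ℝ)) • y := by
    simp only [sub_smul, ite_smul, zero_smul, Finset.sum_sub_distrib,
      Finset.sum_ite_eq', hx, if_true, one_smul, ← hrep]
  apply no_mixed RS hrefl _ hrep2 hx ?_ hz ?_
  · simp [hf'x]
  · have h2 : 0 < (f' z : ℝ) := by exact_mod_cast Nat.pos_of_ne_zero hfz
    simp only [if_neg hzx]
    linarith

lemma dichotomy (P1 P2 : Finset V) (hP : ∀ y ∈ RS.base, (y ∈ P1 ∨ y ∈ P2))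
    (horth : ∀ y ∈ P1, ∀ z ∈ P2, (inner ℝ y z : ℝ) = 0) :
    ∀ n : ℕ, ∀ f : V → ℕ, ∀ a ∈ RS.Φ, a = ∑ x ∈ RS.base, (f x : ℝ) • x →
      ∑ x ∈ RS.base, f x = n →
      (∀ x ∈ RS.base, f x ≠ 0 → x ∈ P1) ∨ (∀ x ∈ RS.base, f x ≠ 0 → x ∈ P2) := by
  classical
  intro n
  induction n using Nat.strong_induction_on with
  | _ n IH =>
  intro f a haΦ hrep hht
  have ha0 : a ≠ 0 := mem_ne_zero RS haΦ
  have hkey : ∃ x ∈ RS.base, f x ≠ 0 ∧ 0 < (inner ℝ x a : ℝ) := by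
    by_contra hcon
    push_neg at hcon
    have haa : 0 < (inner ℝ a a : ℝ) := aux_inner_self_pos ha0
    have hsum : (inner ℝ a a : ℝ) = ∑ x ∈ RS.base, (f x : ℝ) * inner ℝ x a := by
      conv_lhs => rw [hrep]
      rw [sum_inner]
      simp only [real_inner_smul_left]
      rw [hrep]
    have hle : (inner ℝ a a : ℝ) ≤ 0 := by
      rw [hsum]
      apply Finset.sum_nonpos
      intro y hy
      by_cases h0 : f y = 0
      · simp [h0]
      · have h1 := hcon y hy h0
        have h2 : 0 < (f y : ℝ) := by exact_mod_cast Nat.pos_of_ne_zero h0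
        exact mul_nonpos_of_nonneg_of_nonpos (le_of_lt h2) h1
    linarith
  obtain ⟨x, hxb, hfx, hxa⟩ := hkey
  by_cases hax : a = x
  · have hxrep : ∑ y ∈ RS.base, (f y : ℝ) • y
        = ∑ y ∈ RS.base, (if y = x then (1:ℝ) else 0) • y := by
      rw [← hrep, hax]
      simp [ite_smul, Finset.sum_ite_eq', hxb]
    have hfd := coeff_unique RS _ _ hxrep
    have hsupp : ∀ y ∈ RS.base, f y ≠ 0 → y = x := by
      intro y hy hfy
      by_contra hyx
      have := hfd y hy
      rw [if_neg hyx] at this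
      exact hfy (by exact_mod_cast this)
    rcases hP x hxb with h | h
    · left; intro y hy hfy; rwa [hsupp y hy hfy]
    · right; intro y hy hfy; rwa [hsupp y hy hfy]
  · have hax' : 0 < (inner ℝ a x : ℝ) := by
      have h3 : (inner ℝ a x : ℝ) = inner ℝ x a := real_inner_comm x a
      exact lt_of_lt_of_eq hxa h3.symm
    have hsub : a - x ∈ RS.Φ := root_sub_mem RS haΦ (RS.base_sub hxb) hax hax'
    set f' : V → ℕ := fun y => f y - (if y = x then 1 else 0) with hf'
    have hfx1 : 1 ≤ f x := Nat.pos_of_ne_zero hfx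
    have hcast : ∀ y ∈ RS.base, (f' y : ℝ) = (f y : ℝ) - (if y = x then (1:ℝ) else 0) := by
      intro y hy
      by_cases hyx : y = x
      · subst hyx; simp [hf', Nat.cast_sub hfx1]
      · simp [hf', hyx]
    have hf'rep : a - x = ∑ y ∈ RS.base, (f' y : ℝ) • y := by
      calc a - x = ∑ y ∈ RS.base, ((f y : ℝ) - (if y = x then (1:ℝ) else 0)) • y := by
            simp only [sub_smul, ite_smul, zero_smul, Finset.sum_sub_distrib,
              Finset.sum_ite_eq', hxb, if_true, one_smul, ← hrep]
        _ = ∑ y ∈ RS.base, (f' y : ℝ) • y :=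
            Finset.sum_congr rfl (fun y hy => by rw [hcast y hy])
    have hlt : ∑ y ∈ RS.base, f' y < n := by
      rw [← hht]
      apply Finset.sum_lt_sum
      · intro y hy; exact Nat.sub_le _ _
      · refine ⟨x, hxb, ?_⟩
        have hfx' : f' x = f x - 1 := by simp [hf']
        rw [hfx']
        omega
    have hIH := IH _ hlt f' (a - x) hsub hf'rep rfl
    have hgood : ∀ (P : Finset V), x ∈ P → (∀ y ∈ RS.base, f' y ≠ 0 → y ∈ P) →
        (∀ y ∈ RS.base, f y ≠ 0 → y ∈ P) := by
      intro P hxP hs y hy hfy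
      by_cases hyx : y = x
      · rwa [hyx]
      · refine hs y hy ?_
        simpa [hf', hyx] using hfy
    have hbadgen : (∀ y ∈ RS.base, f' y ≠ 0 → (inner ℝ y x : ℝ) = 0) → f' x = 0 → False := by
      intro hor hfx0
      have horth2 : (inner ℝ (a - x) x : ℝ) = 0 := by
        rw [hf'rep, sum_inner]
        apply Finset.sum_eq_zero
        intro y hy
        by_cases h0 : f' y = 0
        · simp [h0]
        · rw [real_inner_smul_left, hor y hy h0, mul_zero]
      have haddΦ : (a - x) + x ∈ RS.Φ := by
        rw [sub_add_cancel]; exact haΦ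
      exact bad_case RS hsub hxb haddΦ horth2 f' hf'rep hfx0
    rcases hIH with h1 | h1
    · by_cases hxP : x ∈ P1
      · exact Or.inl (hgood P1 hxP h1)
      · exfalso
        have hxP2 : x ∈ P2 := (hP x hxb).resolve_left hxP
        apply hbadgen
        · intro y hy hfy; exact horth y (h1 y hy hfy) x hxP2
        · by_contra h0; exact hxP (h1 x hxb h0)
    · by_cases hxP : x ∈ P2
      · exact Or.inr (hgood P2 hxP h1)
      · exfalso
        have hxP1 : x ∈ P1 := (hP x hxb).resolve_right hxP
        apply hbadgen
        · intro y hy hfy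
          have h2 := horth x hxP1 y (h1 y hy hfy)
          exact (real_inner_comm x y).trans h2
        · by_contra h0; exact hxP (h1 x hxb h0)

end Aux3
section Aux4
open RootSystemData
variable {V : Type} [NormedAddCommGroup V] [InnerProductSpace ℝ V] (RS : RootSystemData V)

lemma rep_nonneg (h : V → ℝ) (e : V → ℕ)
    (heq : ∑ b ∈ RS.base, h b • b = ∑ b ∈ RS.base, (e b : ℝ) • b) :
    ∀ z ∈ RS.base, 0 ≤ h z := by
  intro z hz
  have h1 := coeff_unique RS _ _ heq z hz
  rw [h1]; positivity

lemma nat_rep_real (e : V → ℕ) :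
    ∑ b ∈ RS.base, (e b : ℝ) • b = ∑ b ∈ RS.base, e b • b := by
  simp [Nat.cast_smul_eq_nsmul]

lemma highest_inner_nonneg {atil : V} (hatil : RS.IsHighest atil)
    {x : V} (hx : x ∈ RS.base) : 0 ≤ (inner ℝ atil x : ℝ) := by
  classical
  by_contra hcon
  push_neg at hcon
  have hxΦ : x ∈ RS.Φ := RS.base_sub hx
  have hnegx : -x ∈ RS.Φ := RS.neg_mem x hxΦ
  by_cases hax : atil = -x
  · obtain ⟨e, he⟩ := hatil.2 x hxΦ
    have hrep : ∑ b ∈ RS.base, (if b = x then (-2:ℝ) else 0) • b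
        = ∑ b ∈ RS.base, (e b : ℝ) • b := by
      have h1 : ∑ b ∈ RS.base, (if b = x then (-2:ℝ) else 0) • b = (-2:ℝ) • x := by
        simp [ite_smul, Finset.sum_ite_eq', hx]
      rw [h1, nat_rep_real RS e, ← he, hax]
      rw [neg_smul, two_smul]
      abel
    have := rep_nonneg RS _ e hrep x hx
    norm_num at this
  · have hpos : 0 < (inner ℝ atil (-x) : ℝ) := by
      rw [inner_neg_right]; linarith
    have hsum := root_sub_mem RS hatil.1 hnegx hax hpos
    have hsum' : atil + x ∈ RS.Φ := by rwa [sub_neg_eq_add] at hsum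
    obtain ⟨e, he⟩ := hatil.2 (atil + x) hsum'
    have hrep : ∑ b ∈ RS.base, (if b = x then (-1:ℝ) else 0) • b
        = ∑ b ∈ RS.base, (e b : ℝ) • b := by
      have h1 : ∑ b ∈ RS.base, (if b = x then (-1:ℝ) else 0) • b = (-1:ℝ) • x := by
        simp [ite_smul, Finset.sum_ite_eq', hx]
      rw [h1, nat_rep_real RS e, ← he]
      rw [neg_smul, one_smul]
      abel
    have := rep_nonneg RS _ e hrep x hx
    norm_num at this

lemma inner_supp_zero (P1 P2 : Finset V)
    (horth : ∀ y ∈ P1, ∀ z ∈ P2, (inner ℝ y z : ℝ) = 0) (f g : V → ℕ)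
    (hf : ∀ y ∈ RS.base, f y ≠ 0 → y ∈ P1) (hg : ∀ y ∈ RS.base, g y ≠ 0 → y ∈ P2) :
    (inner ℝ (∑ y ∈ RS.base, (f y : ℝ) • y) (∑ y ∈ RS.base, (g y : ℝ) • y) : ℝ) = 0 := by
  rw [sum_inner]
  apply Finset.sum_eq_zero
  intro y hy
  rw [real_inner_smul_left]
  by_cases h0 : f y = 0
  · simp [h0]
  · have h1 : (inner ℝ y (∑ z ∈ RS.base, (g z : ℝ) • z) : ℝ) = 0 := by
      rw [inner_sum]
      apply Finset.sum_eq_zero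
      intro z hz
      rw [real_inner_smul_right]
      by_cases h2 : g z = 0
      · simp [h2]
      · rw [horth y (hf y hy h0) z (hg z hz h2), mul_zero]
    rw [h1, mul_zero]

lemma highest_support (hirr : RS.Irred) {atil : V} (hatil : RS.IsHighest atil)
    (c : V → ℕ) (hcrep : atil = ∑ x ∈ RS.base, (c x : ℝ) • x) :
    ∀ x ∈ RS.base, c x ≠ 0 := by
  classical
  by_contra hcon
  push_neg at hcon
  obtain ⟨x₀, hx₀b, hcx₀⟩ := hcon
  set P1 : Finset V := RS.base.filter (fun y => c y ≠ 0) with hP1def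
  set P2 : Finset V := RS.base.filter (fun y => c y = 0) with hP2def
  have hP : ∀ y ∈ RS.base, y ∈ P1 ∨ y ∈ P2 := by
    intro y hy
    by_cases h : c y = 0
    · right; simp [hP2def, hy, h]
    · left; simp [hP1def, hy, h]
  have horth : ∀ y ∈ P1, ∀ z ∈ P2, (inner ℝ y z : ℝ) = 0 := by
    intro y hy z hz
    rw [hP1def, Finset.mem_filter] at hy
    rw [hP2def, Finset.mem_filter] at hz
    obtain ⟨hyb, hyc⟩ := hy
    obtain ⟨hzb, hzc⟩ := hz
    have hsum : (inner ℝ atil z : ℝ) = ∑ w ∈ RS.base, (c w : ℝ) * inner ℝ w z := by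
      conv_lhs => rw [hcrep]
      rw [sum_inner]
      simp only [real_inner_smul_left]
    have hterm_nonpos : ∀ w ∈ RS.base, (c w : ℝ) * inner ℝ w z ≤ 0 := by
      intro w hw
      by_cases hwz : w = z
      · subst hwz; rw [hzc]; simp
      · have hle0 := simple_orth RS hw hzb hwz
        have hcnn : (0:ℝ) ≤ (c w : ℝ) := Nat.cast_nonneg _
        exact mul_nonpos_of_nonneg_of_nonpos hcnn hle0
    have hge := highest_inner_nonneg RS hatil hzb
    have hle : (inner ℝ atil z : ℝ) ≤ 0 := by
      rw [hsum]; exact Finset.sum_nonpos hterm_nonpos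
    have heq0 : (inner ℝ atil z : ℝ) = 0 := le_antisymm hle hge
    rw [hsum] at heq0
    have hzero := (Finset.sum_eq_zero_iff_of_nonpos hterm_nonpos).mp heq0 y hyb
    have hcy : (0:ℝ) < (c y : ℝ) := by exact_mod_cast Nat.pos_of_ne_zero hyc
    exact (mul_eq_zero.mp hzero).resolve_left (ne_of_gt hcy)
  set T : Set V := {a | a ∈ RS.Φ ∧ ∃ f : V → ℕ,
    ((a = ∑ y ∈ RS.base, (f y : ℝ) • y) ∨ (-a = ∑ y ∈ RS.base, (f y : ℝ) • y)) ∧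
    ∀ y ∈ RS.base, f y ≠ 0 → y ∈ P1} with hTdef
  have hTsub : T ⊆ RS.Φ := fun a ha => ha.1
  have hatilT : atil ∈ T := by
    refine ⟨hatil.1, c, Or.inl hcrep, ?_⟩
    intro y hy hcy
    simp [hP1def, hy, hcy]
  have hTorth : ∀ a ∈ T, ∀ b ∈ RS.Φ \ T, (inner ℝ a b : ℝ) = 0 := by
    intro a haT b hb
    obtain ⟨hbΦ, hbT⟩ := hb
    obtain ⟨haΦ, f, hfrep, hfsupp⟩ := haT
    have hinner : ∀ g : V → ℕ, (∀ y ∈ RS.base, g y ≠ 0 → y ∈ P2) →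
        ((b = ∑ y ∈ RS.base, (g y : ℝ) • y) ∨ (-b = ∑ y ∈ RS.base, (g y : ℝ) • y)) →
        (inner ℝ a b : ℝ) = 0 := by
      intro g hgsupp hgrep
      have key := inner_supp_zero RS P1 P2 horth f g hfsupp hgsupp
      have ha' : a = ∑ y ∈ RS.base, (f y : ℝ) • y ∨
          a = -∑ y ∈ RS.base, (f y : ℝ) • y := by
        rcases hfrep with h | h
        · exact Or.inl h
        · exact Or.inr (by rw [← h, neg_neg])
      have hb' : b = ∑ y ∈ RS.base, (g y : ℝ) • y ∨
          b = -∑ y ∈ RS.base, (g y : ℝ) • y := by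
        rcases hgrep with h | h
        · exact Or.inl h
        · exact Or.inr (by rw [← h, neg_neg])
      rcases ha' with h1 | h1 <;> rcases hb' with h2 | h2 <;>
        rw [h1, h2] <;>
        simp [inner_neg_left, inner_neg_right, key]
    rcases RS.base_gen b hbΦ with ⟨g, hg⟩ | ⟨g, hg⟩
    · have hgR : b = ∑ y ∈ RS.base, (g y : ℝ) • y := by
        rw [hg]; exact (nat_rep_real RS g).symm
      rcases dichotomy RS P1 P2 hP horth (∑ y ∈ RS.base, g y) g b hbΦ hgR rfl with hd | hd
      · exact absurd ⟨hbΦ, g, Or.inl hgR, hd⟩ hbT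
      · exact hinner g hd (Or.inl hgR)
    · have hgR : -b = ∑ y ∈ RS.base, (g y : ℝ) • y := by
        rw [hg]; exact (nat_rep_real RS g).symm
      rcases dichotomy RS P1 P2 hP horth (∑ y ∈ RS.base, g y) g (-b) (RS.neg_mem b hbΦ)
          hgR rfl with hd | hd
      · exact absurd ⟨hbΦ, g, Or.inr hgR, hd⟩ hbT
      · exact hinner g hd (Or.inr hgR)
  have hTeq := hirr.2.2.2 T hTsub ⟨atil, hatilT⟩ hTorth
  have hx₀T : x₀ ∈ T := by rw [hTeq]; exact RS.base_sub hx₀b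
  obtain ⟨_, f, hfr, hfsupp⟩ := hx₀T
  rcases hfr with hfr | hfr
  · have hxrep : ∑ y ∈ RS.base, (if y = x₀ then (1:ℝ) else 0) • y
        = ∑ y ∈ RS.base, (f y : ℝ) • y := by
      rw [← hfr]
      simp [ite_smul, Finset.sum_ite_eq', hx₀b]
    have h1 := coeff_unique RS _ _ hxrep x₀ hx₀b
    rw [if_pos rfl] at h1
    have hfx0 : f x₀ ≠ 0 := by
      intro h
      rw [h] at h1
      simp at h1
    have hmem := hfsupp x₀ hx₀b hfx0
    rw [hP1def, Finset.mem_filter] at hmem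
    exact hmem.2 hcx₀
  · have hxrep : ∑ y ∈ RS.base, (if y = x₀ then (-1:ℝ) else 0) • y
        = ∑ y ∈ RS.base, (f y : ℝ) • y := by
      have h1 : ∑ y ∈ RS.base, (if y = x₀ then (-1:ℝ) else 0) • y = (-1:ℝ) • x₀ := by
        simp [ite_smul, Finset.sum_ite_eq', hx₀b]
      rw [h1, ← hfr, neg_smul, one_smul]
    have h1 := coeff_unique RS _ _ hxrep x₀ hx₀b
    rw [if_pos rfl] at h1
    have : (0:ℝ) ≤ (f x₀ : ℝ) := Nat.cast_nonneg _
    linarith [h1.symm ▸ this]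

end Aux4
section Aux5
open RootSystemData
variable {V : Type} [NormedAddCommGroup V] [InnerProductSpace ℝ V] (RS : RootSystemData V)

lemma coeff_bound {atil : V} (hatil : RS.IsHighest atil) {a : V} (ha : a ∈ RS.Φ)
    (c : V → ℕ) (hcrep : atil = ∑ x ∈ RS.base, (c x : ℝ) • x) :
    ∃ ζ : V → ℤ, a = ∑ y ∈ RS.base, (ζ y : ℝ) • y ∧
      ∀ y ∈ RS.base, -(c y : ℤ) ≤ ζ y ∧ ζ y ≤ (c y : ℤ) := by
  classical
  obtain ⟨ζ, hζ⟩ : ∃ ζ : V → ℤ, a = ∑ y ∈ RS.base, (ζ y : ℝ) • y := by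
    rcases RS.base_gen a ha with ⟨g, hg⟩ | ⟨g, hg⟩
    · refine ⟨fun y => (g y : ℤ), ?_⟩
      rw [hg]
      simp [Nat.cast_smul_eq_nsmul]
    · refine ⟨fun y => -(g y : ℤ), ?_⟩
      have h1 : a = -∑ y ∈ RS.base, (g y : ℕ) • y := by rw [← hg, neg_neg]
      rw [h1]
      rw [← nat_rep_real RS g, ← Finset.sum_neg_distrib]
      apply Finset.sum_congr rfl
      intro y _
      push_cast
      rw [neg_smul]
  refine ⟨ζ, hζ, ?_⟩
  intro y hy
  obtain ⟨d, hd⟩ := hatil.2 a ha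
  obtain ⟨d', hd'⟩ := hatil.2 (-a) (RS.neg_mem a ha)
  rw [sub_neg_eq_add] at hd'
  have h1 : ∑ yy ∈ RS.base, ((c yy : ℝ) - (ζ yy : ℝ)) • yy
      = ∑ yy ∈ RS.base, (d yy : ℝ) • yy := by
    have e1 : ∑ yy ∈ RS.base, ((c yy : ℝ) - (ζ yy : ℝ)) • yy
        = (∑ yy ∈ RS.base, (c yy : ℝ) • yy) - ∑ yy ∈ RS.base, (ζ yy : ℝ) • yy := by
      simp [sub_smul, Finset.sum_sub_distrib]
    rw [e1, ← hcrep, ← hζ, nat_rep_real RS d, ← hd]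
  have h2 : ∑ yy ∈ RS.base, ((c yy : ℝ) + (ζ yy : ℝ)) • yy
      = ∑ yy ∈ RS.base, (d' yy : ℝ) • yy := by
    have e2 : ∑ yy ∈ RS.base, ((c yy : ℝ) + (ζ yy : ℝ)) • yy
        = (∑ yy ∈ RS.base, (c yy : ℝ) • yy) + ∑ yy ∈ RS.base, (ζ yy : ℝ) • yy := by
      simp [add_smul, Finset.sum_add_distrib]
    rw [e2, ← hcrep, ← hζ, nat_rep_real RS d', ← hd']
  have hb1 := rep_nonneg RS _ d h1 y hy
  have hb2 := rep_nonneg RS _ d' h2 y hy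
  constructor
  · exact_mod_cast (by linarith : -(c y : ℝ) ≤ (ζ y : ℝ))
  · exact_mod_cast (by linarith : (ζ y : ℝ) ≤ (c y : ℝ))

lemma proj_apply_sum (J : Finset V) (hJ : J ⊆ RS.base) (h : V → ℝ) :
    RS.proj J (∑ y ∈ RS.base, h y • y) = ∑ y ∈ J, h y • RS.proj J y := by
  classical
  rw [map_sum]
  simp only [map_smul]
  rw [← Finset.sum_sdiff hJ]
  have hz : ∀ y ∈ RS.base \ J, h y • RS.proj J y = 0 := by
    intro y hy
    have hyK : y ∈ Submodule.span ℝ ((RS.base : Set V) \ (J : Set V)) := by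
      apply Submodule.subset_span
      rw [← Finset.coe_sdiff]
      exact_mod_cast hy
    have h0 : RS.proj J y = 0 := by
      have := (Submodule.Quotient.mk_eq_zero
        (Submodule.span ℝ ((RS.base : Set V) \ (J : Set V)))).mpr hyK
      simpa [RootSystemData.proj, Submodule.mkQ_apply] using this
    rw [h0, smul_zero]
  rw [Finset.sum_eq_zero hz, zero_add]

lemma proj_coeff_unique (J : Finset V) (hJ : J ⊆ RS.base) (r : V → ℝ)
    (h : ∑ b ∈ J, r b • RS.proj J b = 0) : ∀ b ∈ J, r b = 0 := by
  classical
  have h1 : RS.proj J (∑ b ∈ J, r b • b) = 0 := by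
    rw [map_sum]
    simp only [map_smul]
    exact h
  have h2 : (∑ b ∈ J, r b • b) ∈ Submodule.span ℝ ((RS.base : Set V) \ (J : Set V)) := by
    have := h1
    rwa [show RS.proj J = Submodule.mkQ _ from rfl, Submodule.mkQ_apply,
      Submodule.Quotient.mk_eq_zero] at this
  rw [← Finset.coe_sdiff] at h2
  obtain ⟨g, -, hg⟩ := Submodule.mem_span_finset.mp h2
  have e1 : ∑ b ∈ RS.base, (if b ∈ J then r b else 0) • b = ∑ b ∈ J, r b • b := by
    simp only [ite_smul, zero_smul]
    rw [Finset.sum_ite_mem, Finset.inter_eq_right.mpr hJ]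
  have e2 : ∑ b ∈ RS.base, (if b ∈ RS.base \ J then g b else 0) • b
      = ∑ b ∈ RS.base \ J, g b • b := by
    simp only [ite_smul, zero_smul]
    rw [Finset.sum_ite_mem, Finset.inter_eq_right.mpr Finset.sdiff_subset]
  have hF : ∑ b ∈ RS.base, (if b ∈ J then r b else 0) • b
      = ∑ b ∈ RS.base, (if b ∈ RS.base \ J then g b else 0) • b :=
    e1.trans (hg.symm.trans e2.symm)
  intro b hb
  have h3 := coeff_unique RS _ _ hF b (hJ hb)
  rw [if_pos hb, if_neg (by simp [hb])] at h3
  exact h3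

end Aux5
open RootSystemData in
theorem stmt5 {V : Type} [NormedAddCommGroup V] [InnerProductSpace ℝ V]
    (RS : RootSystemData V) (hirr : RS.Irred)
    (J : Finset V) (hJ : J ⊆ RS.base) (hrank : 2 ≤ J.card)
    (atil : V) (hatil : RS.IsHighest atil)
    (γ : RS.Qspace J) (hγ : RS.IsSimpleRel J γ) :
    ∀ i j : ℤ, i • RS.proj J atil + j • γ ∈ RS.relRoots J →
      (i = 0 ∨ i = 1 ∨ i = -1) ∧ (i ≠ 0 → (j = 0 ∨ i * j < 0)) := by
  classical
  obtain ⟨hγ0, b₀, hb₀J, hγeq⟩ := hγ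
  have hb₀b : b₀ ∈ RS.base := hJ hb₀J
  have hb₀Φ : b₀ ∈ RS.Φ := RS.base_sub hb₀b
  obtain ⟨d, hd⟩ := hatil.2 b₀ hb₀Φ
  set c : V → ℕ := fun x => d x + (if x = b₀ then 1 else 0) with hcdef
  have hcrep : atil = ∑ x ∈ RS.base, (c x : ℝ) • x := by
    have hc1 : ∀ x, ((c x : ℝ)) = (d x : ℝ) + (if x = b₀ then (1:ℝ) else 0) := by
      intro x
      rw [hcdef]
      push_cast
      split_ifs <;> simp
    have e1 : ∑ x ∈ RS.base, (c x : ℝ) • x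
        = (∑ x ∈ RS.base, (d x : ℝ) • x)
          + ∑ x ∈ RS.base, (if x = b₀ then (1:ℝ) else 0) • x := by
      simp_rw [hc1, add_smul, Finset.sum_add_distrib]
    rw [e1, nat_rep_real RS d, ← hd]
    have e2 : ∑ x ∈ RS.base, (if x = b₀ then (1:ℝ) else 0) • x = b₀ := by
      simp [ite_smul, Finset.sum_ite_eq', hb₀b]
    rw [e2, sub_add_cancel]
  have hsupport := highest_support RS hirr hatil c hcrep
  intro i j hmem
  obtain ⟨⟨a, haΦ, hπa⟩, hne0⟩ := hmem
  obtain ⟨ζ, hζrep, hbound⟩ := coeff_bound RS hatil haΦ c hcrep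
  have h1 : RS.proj J a = ∑ b ∈ J, (ζ b : ℝ) • RS.proj J b := by
    rw [hζrep]; exact proj_apply_sum RS J hJ _
  have h2 : RS.proj J atil = ∑ b ∈ J, (c b : ℝ) • RS.proj J b := by
    rw [hcrep]; exact proj_apply_sum RS J hJ _
  rw [← Int.cast_smul_eq_zsmul ℝ, ← Int.cast_smul_eq_zsmul ℝ, h1, h2, hγeq] at hπa
  have h3 : (i:ℝ) • ∑ b ∈ J, (c b : ℝ) • RS.proj J b
      = ∑ b ∈ J, ((i:ℝ) * (c b : ℝ)) • RS.proj J b := by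
    rw [Finset.smul_sum]
    simp [smul_smul]
  have h4 : (j:ℝ) • RS.proj J b₀
      = ∑ b ∈ J, (if b = b₀ then (j:ℝ) else 0) • RS.proj J b := by
    simp [ite_smul, Finset.sum_ite_eq', hb₀J]
  rw [h3, h4, ← Finset.sum_add_distrib] at hπa
  simp_rw [← add_smul] at hπa
  have h6 : ∑ b ∈ J, ((ζ b : ℝ) - ((i:ℝ) * (c b : ℝ)
      + if b = b₀ then (j:ℝ) else 0)) • RS.proj J b = 0 := by
    simp only [sub_smul, Finset.sum_sub_distrib, hπa, sub_self]
  have h7 := proj_coeff_unique RS J hJ _ h6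
  have hEqZ : ∀ b ∈ J, ζ b = i * (c b : ℤ) + (if b = b₀ then j else 0) := by
    intro b hb
    have h8 := h7 b hb
    have h9 : (ζ b : ℝ) = (i:ℝ) * (c b : ℝ) + (if b = b₀ then (j:ℝ) else 0) := by
      linarith [h8]
    have h10 : ((i * (c b : ℤ) + (if b = b₀ then j else 0) : ℤ) : ℝ)
        = (i:ℝ) * (c b : ℝ) + (if b = b₀ then (j:ℝ) else 0) := by
      push_cast
      split_ifs <;> simp
    exact_mod_cast h9.trans h10.symm
  obtain ⟨b₁, hb₁J, hb₁ne⟩ := Finset.exists_mem_ne (by omega : 1 < J.card) b₀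
  have e1 := hEqZ b₁ hb₁J
  rw [if_neg hb₁ne] at e1
  have e0 := hEqZ b₀ hb₀J
  rw [if_pos rfl] at e0
  obtain ⟨l1, u1⟩ := hbound b₁ (hJ hb₁J)
  obtain ⟨l0, u0⟩ := hbound b₀ hb₀b
  rw [e1] at l1 u1
  rw [e0] at l0 u0
  have hc1 : 1 ≤ (c b₁ : ℤ) := by
    exact_mod_cast Nat.pos_of_ne_zero (hsupport b₁ (hJ hb₁J))
  have hi1 : i ≤ 1 := by
    by_contra hcc
    push_neg at hcc
    have h11 : 2 * (c b₁ : ℤ) ≤ i * (c b₁ : ℤ) :=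
      mul_le_mul_of_nonneg_right (by omega) (by omega)
    omega
  have hi2 : -1 ≤ i := by
    by_contra hcc
    push_neg at hcc
    have h11 : i * (c b₁ : ℤ) ≤ -2 * (c b₁ : ℤ) :=
      mul_le_mul_of_nonneg_right (by omega) (by omega)
    omega
  constructor
  · omega
  · intro hi0
    have : i = 1 ∨ i = -1 := by omega
    rcases this with h | h <;> subst h <;> omega
end

section
/- Let Φ be an irreducible reduced root system with base Π and J ⊆ Π with the relative root system Φ_J = π(Φ)∖{0} of rank ≥ 2, where π is the projection modulo ⟨Π∖J⟩. Let α̃ be the maximal relative root. Then for any positive relative root α ∈ Φ_J⁺ there exist simple relative roots α₁, …, α_n such that every partial sum α + α₁ + ⋯ + α_i is a relative root and α + α₁ + ⋯ + α_n = α̃. -/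
open scoped RealInnerProductSpace

namespace RootSystemData
variable {V : Type} [NormedAddCommGroup V] [InnerProductSpace ℝ V] (RS : RootSystemData V)

lemma aux_inner_self_pos {a : V} (ha : a ∈ RS.Φ) : (0:ℝ) < inner ℝ a a := by
  have h : a ≠ 0 := fun h => RS.zero_notMem (h ▸ ha)
  rw [real_inner_self_eq_norm_mul_norm]
  have : 0 < ‖a‖ := norm_pos_iff.mpr h
  nlinarith

lemma aux_sub_mem {a b : V} (ha : a ∈ RS.Φ) (hb : b ∈ RS.Φ)
    (hpos : (0:ℝ) < inner ℝ a b) (hne : a ≠ b) : a - b ∈ RS.Φ := by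
  have hA := RS.aux_inner_self_pos ha
  have hB := RS.aux_inner_self_pos hb
  obtain ⟨p, hp⟩ := RS.cartan_int a ha b hb
  obtain ⟨q, hq⟩ := RS.cartan_int b hb a ha
  have hcomm : (inner ℝ b a : ℝ) = inner ℝ a b := real_inner_comm a b
  have hppos : (0:ℤ) < p := by
    have : (0:ℝ) < (p:ℝ) := by rw [← hp]; positivity
    exact_mod_cast this
  have hqpos : (0:ℤ) < q := by
    have : (0:ℝ) < (q:ℝ) := by rw [← hq, hcomm]; positivity
    exact_mod_cast this
  have ha0 : a ≠ 0 := fun h => RS.zero_notMem (h ▸ ha)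
  have hb0 : b ≠ 0 := fun h => RS.zero_notMem (h ▸ hb)
  have hnprop : ¬ ∃ r : ℝ, b = r • a := by
    rintro ⟨r, hr⟩
    rcases RS.reduced a ha r (by rw [← hr]; exact hb) with h1 | h1
    · exact hne (by rw [hr, h1, one_smul])
    · rw [hr, h1, neg_one_smul] at hpos
      have : (inner ℝ a (-a) : ℝ) = -(inner ℝ a a) := inner_neg_right a a
      rw [this] at hpos; linarith
  have hne_norm : ‖(inner ℝ a b : ℝ)‖ ≠ ‖a‖ * ‖b‖ := by
    intro h
    obtain ⟨r, _, hr⟩ := (norm_inner_eq_norm_iff (𝕜 := ℝ) ha0 hb0).1 h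
    exact hnprop ⟨r, hr⟩
  have hCS : |(inner ℝ a b : ℝ)| < ‖a‖ * ‖b‖ :=
    lt_of_le_of_ne (abs_real_inner_le_norm a b) (by simpa [Real.norm_eq_abs] using hne_norm)
  have hsq : (inner ℝ a b : ℝ) * inner ℝ a b < inner ℝ a a * inner ℝ b b := by
    rw [real_inner_self_eq_norm_mul_norm, real_inner_self_eq_norm_mul_norm]
    have h2 := mul_self_lt_mul_self (abs_nonneg ((inner ℝ a b : ℝ))) hCS
    rw [abs_mul_abs_self] at h2
    nlinarith [norm_nonneg a, norm_nonneg b]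
  have hpq4 : p * q < 4 := by
    have hr : ((p:ℝ)) * (q:ℝ) < 4 := by
      rw [← hp, ← hq, hcomm, div_mul_div_comm, div_lt_iff₀ (mul_pos hA hB)]
      nlinarith [hsq]
    exact_mod_cast hr
  have hor : p = 1 ∨ q = 1 := by
    by_contra h
    push_neg at h
    have h1 : 2 ≤ p := by omega
    have h2 : 2 ≤ q := by omega
    nlinarith
  rcases hor with h1 | h1
  · have := RS.reflect_mem a ha b hb
    rw [hp, h1] at this
    simp only [Int.cast_one, one_smul] at this
    have h2 := RS.neg_mem _ this
    rwa [neg_sub] at h2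
  · have := RS.reflect_mem b hb a ha
    rw [hq, h1] at this
    simpa only [Int.cast_one, one_smul] using this

lemma aux_add_mem {a b : V} (ha : a ∈ RS.Φ) (hb : b ∈ RS.Φ)
    (hneg : (inner ℝ a b : ℝ) < 0) (hne : a ≠ -b) : a + b ∈ RS.Φ := by
  have hnb := RS.neg_mem b hb
  have h1 : (0:ℝ) < inner ℝ a (-b) := by
    have : (inner ℝ a (-b) : ℝ) = -(inner ℝ a b) := inner_neg_right a b
    rw [this]; linarith
  have := RS.aux_sub_mem ha hnb h1 hne
  rwa [sub_neg_eq_add] at this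

lemma baseCoeff (g : V → ℝ) (h : ∑ x ∈ RS.base, g x • x = 0) : ∀ x ∈ RS.base, g x = 0 := by
  have hli := Fintype.linearIndependent_iff.mp RS.base_indep (fun i => g i)
  have hsum : ∑ i : RS.base, g i • (i : V) = 0 := by
    rw [Finset.sum_coe_sort RS.base (fun x => g x • x)]; exact h
  intro x hx
  exact hli hsum ⟨x, hx⟩

lemma proj_base_zero (J : Finset V) {x : V} (hx : x ∈ RS.base) (hxJ : x ∉ J) :
    RS.proj J x = 0 := by
  rw [RootSystemData.proj, Submodule.mkQ_apply, Submodule.Quotient.mk_eq_zero]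
  exact Submodule.subset_span ⟨hx, hxJ⟩

lemma relCoeff {J : Finset V} (hJ : J ⊆ RS.base) (r : V → ℝ)
    (h : ∑ b ∈ J, r b • RS.proj J b = 0) : ∀ b ∈ J, r b = 0 := by
  classical
  have h1 : RS.proj J (∑ b ∈ J, r b • b) = 0 := by
    rw [map_sum]
    simpa only [map_smul] using h
  have h2 : (∑ b ∈ J, r b • b) ∈ Submodule.span ℝ ((RS.base : Set V) \ (J : Set V)) := by
    rwa [RootSystemData.proj, Submodule.mkQ_apply, Submodule.Quotient.mk_eq_zero] at h1
  rw [← Finset.coe_sdiff] at h2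
  obtain ⟨s, -, hs⟩ := Submodule.mem_span_finset.mp h2
  set g : V → ℝ := fun y => if y ∈ J then r y else -(s y) with hg
  have hgsum : ∑ y ∈ RS.base, g y • y = 0 := by
    rw [← Finset.sum_sdiff hJ]
    have hA : ∑ y ∈ RS.base \ J, g y • y = -(∑ y ∈ RS.base \ J, s y • y) := by
      rw [← Finset.sum_neg_distrib]
      refine Finset.sum_congr rfl fun y hy => ?_
      have hyJ : y ∉ J := (Finset.mem_sdiff.mp hy).2
      simp [hg, hyJ, neg_smul]
    have hB : ∑ y ∈ J, g y • y = ∑ b ∈ J, r b • b :=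
      Finset.sum_congr rfl fun y hy => by simp [hg, hy]
    rw [hA, hB, hs]
    exact neg_add_cancel _
  have hbc := RS.baseCoeff g hgsum
  intro b hb
  have := hbc b (hJ hb)
  simpa [hg, hb] using this

lemma natReal (J : Finset V) (k : V → ℕ) :
    ∑ b ∈ J, k b • RS.proj J b = ∑ b ∈ J, ((k b : ℝ)) • RS.proj J b :=
  Finset.sum_congr rfl fun b _ => (Nat.cast_smul_eq_nsmul ℝ _ _).symm

lemma natCombo_ne {J : Finset V} (hJ : J ⊆ RS.base) (k : V → ℕ) {b0 : V}
    (hb0 : b0 ∈ J) (hk : k b0 ≠ 0) : ∑ b ∈ J, k b • RS.proj J b ≠ 0 := by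
  intro h
  rw [RS.natReal] at h
  have h2 : (k b0 : ℝ) = 0 := RS.relCoeff hJ (fun b => (k b : ℝ)) h b0 hb0
  exact hk (Nat.cast_eq_zero.mp h2)

lemma singleCombo [DecidableEq V] {J : Finset V} {x : V} (hx : x ∈ J) :
    ∑ b ∈ J, (if b = x then (1:ℝ) else 0) • RS.proj J b = RS.proj J x := by
  classical
  have h1 : ∀ b ∈ J, (if b = x then (1:ℝ) else 0) • RS.proj J b
      = (if b = x then RS.proj J b else 0) := by
    intro b _; split <;> simp
  rw [Finset.sum_congr rfl h1, Finset.sum_ite_eq' J x (fun b => RS.proj J b), if_pos hx]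

lemma proj_simple_ne {J : Finset V} (hJ : J ⊆ RS.base) {x : V} (hx : x ∈ J) :
    RS.proj J x ≠ 0 := by
  classical
  intro h
  have h1 : ∑ b ∈ J, (if b = x then (1:ℝ) else 0) • RS.proj J b = 0 := by
    rw [RS.singleCombo hx, h]
  have := RS.relCoeff hJ _ h1 x hx
  simp at this

end RootSystemData
namespace RootSystemData
variable {V : Type} [NormedAddCommGroup V] [InnerProductSpace ℝ V] (RS : RootSystemData V)

lemma chain {J : Finset V} (hJ : J ⊆ RS.base) :
    ∀ N : ℕ, ∀ a e : V, a ∈ RS.Φ → e ∈ RS.Φ → ∀ c : V → ℕ,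
      e - a = ∑ x ∈ RS.base, c x • x → ∑ x ∈ RS.base, c x ≤ N →
      ∀ k : V → ℕ, RS.proj J a = ∑ b ∈ J, k b • RS.proj J b → RS.proj J a ≠ 0 →
      ∃ n : ℕ, ∃ f : ℕ → RS.Qspace J,
        (∀ t < n, RS.IsSimpleRel J (f t)) ∧
        (∀ i ≤ n, RS.proj J a + ∑ t ∈ Finset.range i, f t ∈ RS.relRoots J) ∧
        RS.proj J a + ∑ t ∈ Finset.range n, f t = RS.proj J e := by
  classical
  intro N
  induction N with
  | zero =>
      intro a e ha he c hdec hcard k hk hne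
      have hc0 : ∀ x ∈ RS.base, c x = 0 :=
        fun x hx => Finset.sum_eq_zero_iff.mp (Nat.le_zero.mp hcard) x hx
      have hae : e = a := by
        have h1 : e - a = 0 := by
          rw [hdec]
          exact Finset.sum_eq_zero fun x hx => by rw [hc0 x hx, zero_smul]
        have := sub_eq_zero.mp h1
        exact this
      refine ⟨0, fun _ => 0, by omega, ?_, ?_⟩
      · intro i hi
        have hi0 : i = 0 := by omega
        subst hi0
        rw [Finset.range_zero, Finset.sum_empty, add_zero]
        exact ⟨⟨a, ha, rfl⟩, hne⟩
      · rw [hae]; simp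
  | succ N ih =>
      intro a e ha he c hdec hcard k hk hne
      by_cases hea : e = a
      · subst hea
        refine ⟨0, fun _ => 0, by omega, ?_, by simp⟩
        intro i hi
        have hi0 : i = 0 := by omega
        subst hi0
        rw [Finset.range_zero, Finset.sum_empty, add_zero]
        exact ⟨⟨e, he, rfl⟩, hne⟩
      · set d := e - a with hdef
        have hd0 : d ≠ 0 := sub_ne_zero.mpr hea
        have hdd : (0:ℝ) < inner ℝ d d := by
          rw [real_inner_self_eq_norm_mul_norm]
          have : 0 < ‖d‖ := norm_pos_iff.mpr hd0
          nlinarith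
        have hsum : (inner ℝ d d : ℝ) = ∑ x ∈ RS.base, (c x : ℝ) * inner ℝ x d := by
          nth_rewrite 1 [hdec]
          rw [sum_inner]
          exact Finset.sum_congr rfl fun x _ => by
            rw [← Nat.cast_smul_eq_nsmul ℝ, real_inner_smul_left]
        have hex0 : ∃ x ∈ RS.base, 0 < c x ∧ (0:ℝ) < inner ℝ x d := by
          by_contra hcon
          push_neg at hcon
          have hle : (inner ℝ d d : ℝ) ≤ 0 := by
            rw [hsum]
            refine Finset.sum_nonpos fun x hx => ?_
            rcases Nat.eq_zero_or_pos (c x) with h | h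
            · rw [h]; simp
            · exact mul_nonpos_of_nonneg_of_nonpos (Nat.cast_nonneg _) (hcon x hx h)
          linarith
        obtain ⟨x, hxbase, hcx, hxd⟩ := hex0
        set c' : V → ℕ := fun y => if y = x then c x - 1 else c y with hc'
        have hc'x : c' x = c x - 1 := if_pos rfl
        have hc'ne : ∀ y, y ≠ x → c' y = c y := fun y hy => if_neg hy
        have hc'sum : ∑ y ∈ RS.base, c' y • y = (∑ y ∈ RS.base, c y • y) - x := by
          have hstep : ∀ y ∈ RS.base, c' y • y = c y • y - (if y = x then x else 0) := by
            intro y hy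
            by_cases h : y = x
            · subst h
              rw [hc'x, if_pos rfl, eq_sub_iff_add_eq, ← succ_nsmul,
                (by omega : c y - 1 + 1 = c y)]
            · rw [hc'ne y h, if_neg h, sub_zero]
          rw [Finset.sum_congr rfl hstep, Finset.sum_sub_distrib,
            Finset.sum_ite_eq' RS.base x (fun _ => x), if_pos hxbase]
        have hcard' : ∑ y ∈ RS.base, c' y ≤ N := by
          have e1 := Finset.add_sum_erase RS.base c hxbase
          have e2 := Finset.add_sum_erase RS.base c' hxbase
          have e3 : ∑ y ∈ RS.base.erase x, c' y = ∑ y ∈ RS.base.erase x, c y :=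
            Finset.sum_congr rfl fun y hy => hc'ne y (Finset.ne_of_mem_erase hy)
          omega
        have hb0ex : ∃ b ∈ J, k b ≠ 0 := by
          by_contra hcon
          push_neg at hcon
          apply hne
          rw [hk]
          exact Finset.sum_eq_zero fun b hb => by rw [hcon b hb, zero_smul]
        obtain ⟨b0, hb0J, hkb0⟩ := hb0ex
        have hπd : RS.proj J d = ∑ b ∈ J, c b • RS.proj J b := by
          rw [hdec, map_sum, ← Finset.sum_sdiff hJ (f := fun y => RS.proj J (c y • y))]
          have h0 : ∑ y ∈ RS.base \ J, RS.proj J (c y • y) = 0 :=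
            Finset.sum_eq_zero fun y hy => by
              have hy' := Finset.mem_sdiff.mp hy
              rw [map_nsmul, RS.proj_base_zero J hy'.1 hy'.2, smul_zero]
          rw [h0, zero_add]
          exact Finset.sum_congr rfl fun b _ => by rw [map_nsmul]
        have hπe : RS.proj J e = ∑ b ∈ J, (k b + c b) • RS.proj J b := by
          have h1 : RS.proj J e = RS.proj J a + RS.proj J d := by
            rw [← map_add]
            congr 1
            rw [hdef]; abel
          rw [h1, hk, hπd, ← Finset.sum_add_distrib]
          exact Finset.sum_congr rfl fun b _ => (add_nsmul _ _ _).symm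
        by_cases hxa : (inner ℝ x a : ℝ) < 0
        · -- ascend from the bottom
          have hax_ne : a ≠ -x := by
            intro hax
            by_cases hxJ : x ∈ J
            · have hpx : RS.proj J a = -(RS.proj J x) := by rw [hax, map_neg]
              have hr : ∑ b ∈ J, ((k b : ℝ) + if b = x then 1 else 0) • RS.proj J b = 0 := by
                have hterm : ∀ b ∈ J, ((k b : ℝ) + if b = x then 1 else 0) • RS.proj J b
                    = (k b : ℝ) • RS.proj J b + (if b = x then (1:ℝ) else 0) • RS.proj J b :=
                  fun b _ => add_smul _ _ _
                rw [Finset.sum_congr rfl hterm, Finset.sum_add_distrib, RS.singleCombo hxJ,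
                  ← RS.natReal, ← hk, hpx]
                exact neg_add_cancel _
              have hx' := RS.relCoeff hJ _ hr x hxJ
              simp only [eq_self_iff_true, if_true] at hx'
              have h2 : (0:ℝ) ≤ (k x : ℝ) := Nat.cast_nonneg _
              linarith
            · apply hne
              rw [hax, map_neg, RS.proj_base_zero J hxbase hxJ, neg_zero]
          have haxmem : a + x ∈ RS.Φ := RS.aux_add_mem ha (RS.base_sub hxbase)
            (by rw [real_inner_comm]; exact hxa) hax_ne
          have hdec2 : e - (a + x) = ∑ y ∈ RS.base, c' y • y := by
            rw [hc'sum, ← hdec, hdef]; abel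
          by_cases hxJ : x ∈ J
          · set k' : V → ℕ := fun b => if b = x then k b + 1 else k b with hk'
            have hk'x : k' x = k x + 1 := if_pos rfl
            have hk'ne : ∀ b, b ≠ x → k' b = k b := fun b hb => if_neg hb
            have hπa' : RS.proj J (a + x) = ∑ b ∈ J, k' b • RS.proj J b := by
              have h1 : ∀ b ∈ J, k' b • RS.proj J b
                  = k b • RS.proj J b + (if b = x then RS.proj J b else 0) := by
                intro b _
                by_cases h : b = x
                · subst h
                  rw [hk'x, if_pos rfl, succ_nsmul]
                · rw [hk'ne b h, if_neg h, add_zero]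
              rw [map_add, Finset.sum_congr rfl h1, Finset.sum_add_distrib,
                Finset.sum_ite_eq' J x (fun b => RS.proj J b), if_pos hxJ, ← hk]
            have hne' : RS.proj J (a + x) ≠ 0 := by
              rw [hπa']
              exact RS.natCombo_ne hJ k' (b0 := x) hxJ (by omega)
            obtain ⟨n, f, hs, hp, hl⟩ := ih (a + x) e haxmem he c' hdec2 hcard' k' hπa' hne'
            refine ⟨n + 1, fun t => Nat.casesOn (motive := fun _ => RS.Qspace J) t (RS.proj J x) f,
              ?_, ?_, ?_⟩
            · intro t ht
              cases t with
              | zero => exact ⟨RS.proj_simple_ne hJ hxJ, x, hxJ, rfl⟩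
              | succ m => exact hs m (by omega)
            · intro i hi
              cases i with
              | zero =>
                  rw [Finset.range_zero, Finset.sum_empty, add_zero]
                  exact ⟨⟨a, ha, rfl⟩, hne⟩
              | succ j =>
                  have hsumg : ∑ t ∈ Finset.range (j+1),
                      (Nat.casesOn (motive := fun _ => RS.Qspace J) t (RS.proj J x) f)
                      = RS.proj J x + ∑ t ∈ Finset.range j, f t := by
                    rw [Finset.sum_range_succ']
                    exact add_comm _ _
                  rw [hsumg, ← add_assoc, ← map_add]
                  exact hp j (by omega)
            · have hsumg : ∑ t ∈ Finset.range (n+1),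
                  (Nat.casesOn (motive := fun _ => RS.Qspace J) t (RS.proj J x) f)
                  = RS.proj J x + ∑ t ∈ Finset.range n, f t := by
                rw [Finset.sum_range_succ']
                exact add_comm _ _
              rw [hsumg, ← add_assoc, ← map_add]
              exact hl
          · have heq : RS.proj J (a + x) = RS.proj J a := by
              rw [map_add, RS.proj_base_zero J hxbase hxJ, add_zero]
            obtain ⟨n, f, hs, hp, hl⟩ := ih (a + x) e haxmem he c' hdec2 hcard' k
              (heq.trans hk) (by rw [heq]; exact hne)
            rw [heq] at hp hl
            exact ⟨n, f, hs, hp, hl⟩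
        · -- descend from the top
          push_neg at hxa
          have hxe : (0:ℝ) < inner ℝ x e := by
            have h1 : e = a + d := by rw [hdef]; abel
            have h2 : (inner ℝ x e : ℝ) = inner ℝ x a + inner ℝ x d := by
              rw [h1, inner_add_right]
            rw [h2]
            linarith
          have hex : e ≠ x := by
            intro hexq
            by_cases hxJ : x ∈ J
            · have hπx : RS.proj J e = RS.proj J x := by rw [hexq]
              have hr : ∑ b ∈ J, (((k b + c b : ℕ) : ℝ) - if b = x then 1 else 0)
                  • RS.proj J b = 0 := by
                have hterm : ∀ b ∈ J, (((k b + c b : ℕ) : ℝ) - if b = x then 1 else 0)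
                    • RS.proj J b
                    = ((k b + c b : ℕ) : ℝ) • RS.proj J b
                      - (if b = x then (1:ℝ) else 0) • RS.proj J b :=
                  fun b _ => sub_smul _ _ _
                rw [Finset.sum_congr rfl hterm, Finset.sum_sub_distrib, RS.singleCombo hxJ,
                  ← RS.natReal, ← hπe, hπx]
                exact sub_self _
              have hx' := RS.relCoeff hJ _ hr x hxJ
              have hb0' := RS.relCoeff hJ _ hr b0 hb0J
              simp only [eq_self_iff_true, if_true] at hx'
              have hx2 : ((k x + c x : ℕ) : ℝ) = 1 := by linarith
              have hx3 : k x + c x = 1 := by exact_mod_cast hx2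
              by_cases hbx : b0 = x
              · subst hbx; omega
              · simp only [if_neg hbx] at hb0'
                have hb2 : ((k b0 + c b0 : ℕ) : ℝ) = 0 := by linarith
                have hb3 : k b0 + c b0 = 0 := by exact_mod_cast hb2
                omega
            · have h0 : RS.proj J e = 0 := by
                rw [hexq]; exact RS.proj_base_zero J hxbase hxJ
              have h1 : RS.proj J e ≠ 0 := by
                rw [hπe]
                exact RS.natCombo_ne hJ _ (b0 := b0) hb0J (by omega)
              exact h1 h0
          have he' : e - x ∈ RS.Φ := RS.aux_sub_mem he (RS.base_sub hxbase)
            (by rw [real_inner_comm]; exact hxe) hex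
          have hdec2 : (e - x) - a = ∑ y ∈ RS.base, c' y • y := by
            rw [hc'sum, ← hdec, hdef]; abel
          obtain ⟨n, f, hs, hp, hl⟩ := ih a (e - x) ha he' c' hdec2 hcard' k hk hne
          by_cases hxJ : x ∈ J
          · refine ⟨n + 1, fun t => if t = n then RS.proj J x else f t, ?_, ?_, ?_⟩
            · intro t ht
              by_cases h : t = n
              · simp only [h, if_pos rfl]
                exact ⟨RS.proj_simple_ne hJ hxJ, x, hxJ, rfl⟩
              · simp only [if_neg h]
                exact hs t (by omega)
            · intro i hi
              by_cases h : i = n + 1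
              · subst h
                have hsumg : ∑ t ∈ Finset.range (n+1),
                    (if t = n then RS.proj J x else f t)
                    = (∑ t ∈ Finset.range n, f t) + RS.proj J x := by
                  rw [Finset.sum_range_succ, if_pos rfl]
                  congr 1
                  exact Finset.sum_congr rfl fun t ht =>
                    if_neg (Finset.mem_range.mp ht).ne
                rw [hsumg, ← add_assoc, hl]
                have h2 : RS.proj J (e - x) + RS.proj J x = RS.proj J e := by
                  rw [← map_add]
                  congr 1
                  abel
                rw [h2]
                refine ⟨⟨e, he, rfl⟩, ?_⟩
                rw [hπe]
                exact RS.natCombo_ne hJ _ (b0 := b0) hb0J (by omega)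
              · have hin : i ≤ n := by omega
                have hsumg : ∑ t ∈ Finset.range i, (if t = n then RS.proj J x else f t)
                    = ∑ t ∈ Finset.range i, f t :=
                  Finset.sum_congr rfl fun t ht =>
                    if_neg (by have := Finset.mem_range.mp ht; omega)
                rw [hsumg]
                exact hp i hin
            · have hsumg : ∑ t ∈ Finset.range (n+1), (if t = n then RS.proj J x else f t)
                  = (∑ t ∈ Finset.range n, f t) + RS.proj J x := by
                rw [Finset.sum_range_succ, if_pos rfl]
                congr 1
                exact Finset.sum_congr rfl fun t ht => if_neg (Finset.mem_range.mp ht).ne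
              rw [hsumg, ← add_assoc, hl, ← map_add]
              congr 1
              abel
          · have heq : RS.proj J (e - x) = RS.proj J e := by
              rw [map_sub, RS.proj_base_zero J hxbase hxJ, sub_zero]
            rw [heq] at hl
            exact ⟨n, f, hs, hp, hl⟩

end RootSystemData

open RootSystemData in
theorem stmt6 {V : Type} [NormedAddCommGroup V] [InnerProductSpace ℝ V]
    (RS : RootSystemData V) (hirr : RS.Irred)
    (J : Finset V) (hJ : J ⊆ RS.base) (hrank : 2 ≤ J.card)
    (atil : V) (hatil : RS.IsHighest atil)
    (α : RS.Qspace J) (hα : RS.IsPosRel J α) :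
    ∃ (n : ℕ) (f : ℕ → RS.Qspace J),
      (∀ t < n, RS.IsSimpleRel J (f t)) ∧
      (∀ i ≤ n, α + ∑ t ∈ Finset.range i, f t ∈ RS.relRoots J) ∧
      α + ∑ t ∈ Finset.range n, f t = RS.proj J atil := by
  classical
  obtain ⟨hmem, k, hkc⟩ := hα
  obtain ⟨⟨a0, ha0, hpa0⟩, hα0⟩ := hmem
  obtain ⟨c, hc⟩ := hatil.2 a0 ha0
  have hne : RS.proj J a0 ≠ 0 := by
    rw [hpa0]
    simpa using hα0
  have hk0 : RS.proj J a0 = ∑ b ∈ J, k b • RS.proj J b := by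
    rw [hpa0]; exact hkc
  obtain ⟨n, f, hs, hp, hl⟩ := RS.chain hJ (∑ x ∈ RS.base, c x) a0 atil ha0 hatil.1
    c hc le_rfl k hk0 hne
  rw [hpa0] at hp hl
  exact ⟨n, f, hs, hp, hl⟩
end
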